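/- arXiv:math/0102005 — 3 statements merged into one kernel-verified Lean document; each statement's English description precedes it below -/
import Mathlib

section
/- Let ψ : R → S be a local homomorphism between commutative noetherian local rings with maximal ideals m ⊂ R and n ⊂ S (so ψ(m) ⊆ n). Let u : M → N be a homomorphism of finitely generated S-modules such that N is flat as an R-module (via ψ). If the induced map u ⊗_R R/m : M/mM → N/mN is injective and its cokernel is a free S/mS-module, then u itself is injective and its cokernel is a free S-module. -/
open TensorProduct




open TensorProduct IsLocalRing




section Aux

variable {A : Type*} [CommRing A] {M N : Type*} [AddCommGroup M] [AddCommGroup N]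
  [Module A M] [Module A N]

/-- L1: injectivity of tensoring with `A ⧸ J` in terms of submodule comparison. -/
lemma aux_inj_lTensor_quot_iff (f : M →ₗ[A] N) (J : Ideal A) :
    Function.Injective (f.lTensor (A ⧸ J)) ↔
      ∀ x : M, f x ∈ J • (⊤ : Submodule A N) → x ∈ J • (⊤ : Submodule A M) := by
  classical
  set eM := TensorProduct.quotTensorEquivQuotSMul M J
  set eN := TensorProduct.quotTensorEquivQuotSMul N J
  have hle : J • (⊤ : Submodule A M) ≤
      Submodule.comap f (J • (⊤ : Submodule A N)) := by
    rw [Submodule.map_le_iff_le_comap.symm, Submodule.map_smul'']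
    exact smul_mono_right _ le_top
  set g : (M ⧸ J • (⊤ : Submodule A M)) →ₗ[A] (N ⧸ J • (⊤ : Submodule A N)) :=
    Submodule.mapQ _ _ f hle
  have hnat : eN.toLinearMap ∘ₗ f.lTensor (A ⧸ J) = g ∘ₗ eM.toLinearMap := by
    apply TensorProduct.ext'
    intro c x
    obtain ⟨a, rfl⟩ := Ideal.Quotient.mk_surjective c
    simp only [LinearMap.coe_comp, Function.comp_apply, LinearMap.lTensor_tmul,
      LinearEquiv.coe_coe, TensorProduct.quotTensorEquivQuotSMul_mk_tmul, eM, eN, g,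
      Submodule.mapQ_apply, map_smul]
  have hfun : ∀ z, eN (f.lTensor (A ⧸ J) z) = g (eM z) := fun z => by
    simpa using LinearMap.congr_fun hnat z
  constructor
  · intro h x hx
    have : g (Submodule.Quotient.mk x) = 0 := by
      simpa [g, Submodule.mapQ_apply, Submodule.Quotient.mk_eq_zero] using hx
    -- transfer to tensor
    have h2 : eN (f.lTensor (A ⧸ J) (eM.symm (Submodule.Quotient.mk x))) = 0 := by
      rw [hfun]; simpa using this
    have h3 : f.lTensor (A ⧸ J) (eM.symm (Submodule.Quotient.mk x)) = 0 := by
      apply eN.injective; simpa using h2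
    have h4 : eM.symm (Submodule.Quotient.mk x) = 0 := h (by simpa using h3)
    have h5 : (Submodule.Quotient.mk x : M ⧸ J • (⊤ : Submodule A M)) = 0 := by
      apply eM.symm.injective; simpa using h4
    exact (Submodule.Quotient.mk_eq_zero _).mp h5
  · intro h z z' hzz
    -- g is injective
    have hg : Function.Injective g := by
      rw [← LinearMap.ker_eq_bot, LinearMap.ker_eq_bot']
      intro w hw
      obtain ⟨x, rfl⟩ := Submodule.Quotient.mk_surjective _ w
      have : f x ∈ J • (⊤ : Submodule A N) := by
        rw [← Submodule.Quotient.mk_eq_zero]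
        simpa [g, Submodule.mapQ_apply] using hw
      rw [Submodule.Quotient.mk_eq_zero]
      exact h x this
    have h0 : g (eM (z - z')) = 0 := by
      rw [← hfun, map_sub, hzz, sub_self, map_zero]
    have : eM (z - z') = 0 := hg (by simpa using h0)
    have : z - z' = 0 := by simpa using congrArg eM.symm this
    exact sub_eq_zero.mp this

/-- L5: tensoring a map with range in `J • ⊤` with `A ⧸ J` kills it. -/
lemma aux_lTensor_eq_zero {W : Type*} [AddCommGroup W] [Module A W]
    (J : Ideal A) (w : W →ₗ[A] N) (h : ∀ x, w x ∈ J • (⊤ : Submodule A N)) :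
    w.lTensor (A ⧸ J) = 0 := by
  have key : ∀ y ∈ J • (⊤ : Submodule A N), ∀ c : A ⧸ J,
      (c ⊗ₜ[A] y : (A ⧸ J) ⊗[A] N) = 0 := by
    intro y hy
    refine Submodule.smul_induction_on hy ?_ ?_
    · intro a ha p _ c
      obtain ⟨r, rfl⟩ := Ideal.Quotient.mk_surjective c
      have hsm : a • (Ideal.Quotient.mk J r) = Ideal.Quotient.mk J (a * r) := by
        rw [Algebra.smul_def, Ideal.Quotient.algebraMap_eq, ← map_mul]
      rw [tmul_smul, smul_tmul', hsm,
        Ideal.Quotient.eq_zero_iff_mem.mpr (J.mul_mem_right r ha), zero_tmul]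
    · intro y z hy hz c
      rw [tmul_add, hy, hz, add_zero]
  apply TensorProduct.ext'
  intro c x
  simpa using key (w x) (h x) c

end Aux





section Aux2

variable {R S : Type*} [CommRing R] [CommRing S] [Algebra R S]

/-- L3: pushforward smul-top agrees with base smul-top after restriction of scalars. -/
lemma aux_restrict_smul_top (J : Ideal R) (X : Type*) [AddCommGroup X] [Module S X]
    [Module R X] [IsScalarTower R S X] :
    ((J.map (algebraMap R S)) • (⊤ : Submodule S X)).restrictScalars R
      = J • (⊤ : Submodule R X) := by
  apply le_antisymm
  · intro x hx
    have key : ∀ s ∈ J.map (algebraMap R S), ∀ y : X,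
        s • y ∈ J • (⊤ : Submodule R X) := by
      intro s hs
      refine Submodule.span_induction ?_ ?_ ?_ ?_ hs
      · rintro _ ⟨a, ha, rfl⟩ y
        rw [algebraMap_smul]
        exact Submodule.smul_mem_smul ha trivial
      · intro y; rw [zero_smul]; exact zero_mem _
      · intro s t _ _ hs ht y
        rw [add_smul]; exact add_mem (hs y) (ht y)
      · intro t s _ hs y
        rw [smul_eq_mul, mul_comm, mul_smul]
        exact hs (t • y)
    rw [Submodule.restrictScalars_mem] at hx
    refine Submodule.smul_induction_on (p := fun x => x ∈ J • (⊤ : Submodule R X)) hx ?_ ?_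
    · intro s hs y _; exact key s hs y
    · intro y z hy hz; exact add_mem hy hz
  · refine Submodule.smul_le.mpr ?_
    intro a ha x _
    have : a • x = (algebraMap R S a) • x := (algebraMap_smul S a x).symm
    rw [Submodule.restrictScalars_mem, this]
    exact Submodule.smul_mem_smul (Ideal.mem_map_of_mem _ ha) trivial

variable {M N : Type*} [AddCommGroup M] [AddCommGroup N] [Module R M] [Module R N]

/-- L2: reduce injectivity of tensoring with a module killed by a maximal ideal to the
residue field. -/
lemma aux_inj_lTensor_torsion (f : M →ₗ[R] N) (J : Ideal R) [J.IsMaximal]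
    (V : Type*) [AddCommGroup V] [Module R V] (hV : Module.IsTorsionBySet R V J)
    (hf : Function.Injective (f.lTensor (R ⧸ J))) :
    Function.Injective (f.lTensor V) := by
  classical
  letI : Module (R ⧸ J) V := hV.module
  haveI : IsScalarTower R (R ⧸ J) V := hV.isScalarTower
  letI : Field (R ⧸ J) := Ideal.Quotient.field J
  let b := Module.Free.chooseBasis (R ⧸ J) V
  let ι := Module.Free.ChooseBasisIndex (R ⧸ J) V
  let e : V ≃ₗ[R] (ι →₀ (R ⧸ J)) := b.repr.restrictScalars R
  -- Step 1: injectivity for `ι →₀ R ⧸ J`.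
  have step1 : Function.Injective (f.lTensor (ι →₀ (R ⧸ J))) := by
    intro z z' hzz
    have hz : f.lTensor (ι →₀ (R ⧸ J)) (z - z') = 0 := by
      rw [map_sub, hzz, sub_self]
    have hcomp : ∀ i : ι,
        (f.lTensor (R ⧸ J)) ∘ₗ ((Finsupp.lapply i : (ι →₀ (R ⧸ J)) →ₗ[R] R ⧸ J).rTensor M)
          = ((Finsupp.lapply i : (ι →₀ (R ⧸ J)) →ₗ[R] R ⧸ J).rTensor N)
              ∘ₗ (f.lTensor (ι →₀ (R ⧸ J))) := by
      intro i
      rw [LinearMap.lTensor_comp_rTensor, LinearMap.rTensor_comp_lTensor]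
    have hall : ∀ i, (TensorProduct.finsuppLeft R R (R ⧸ J) M ι) (z - z') i = 0 := by
      intro i
      rw [TensorProduct.finsuppLeft_apply]
      apply hf
      have := LinearMap.congr_fun (hcomp i) (z - z')
      rw [LinearMap.comp_apply, LinearMap.comp_apply] at this
      rw [this, hz, map_zero, map_zero]
    have : (TensorProduct.finsuppLeft R R (R ⧸ J) M ι) (z - z') = 0 := by
      ext i; exact hall i
    have : z - z' = 0 := by
      simpa using congrArg (TensorProduct.finsuppLeft R R (R ⧸ J) M ι).symm this
    exact sub_eq_zero.mp this
  -- Step 2: conjugate along `e`.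
  intro z z' hzz
  have hcomm : (f.lTensor (ι →₀ (R ⧸ J))) ∘ₗ (e.toLinearMap.rTensor M)
      = (e.toLinearMap.rTensor N) ∘ₗ (f.lTensor V) := by
    rw [LinearMap.lTensor_comp_rTensor, LinearMap.rTensor_comp_lTensor]
  have h1 := LinearMap.congr_fun hcomm z
  have h2 := LinearMap.congr_fun hcomm z'
  rw [LinearMap.comp_apply, LinearMap.comp_apply] at h1 h2
  have h3 : e.toLinearMap.rTensor M z = e.toLinearMap.rTensor M z' := by
    apply step1
    rw [h1, h2, hzz]
  -- rTensor of an equiv is injective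
  have hinv : (e.symm.toLinearMap.rTensor M) ∘ₗ (e.toLinearMap.rTensor M)
      = LinearMap.id := by
    rw [← LinearMap.rTensor_comp]
    have : e.symm.toLinearMap ∘ₗ e.toLinearMap = LinearMap.id := by
      ext v; simp
    rw [this, LinearMap.rTensor_id]
  have := congrArg (e.symm.toLinearMap.rTensor M) h3
  rw [← LinearMap.comp_apply, ← LinearMap.comp_apply, hinv] at this
  simpa using this

end Aux2



section Aux3

variable {R : Type*} [CommRing R] [IsLocalRing R]
  {M N : Type*} [AddCommGroup M] [AddCommGroup N] [Module R M] [Module R N]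

/-- Core induction: injectivity of `f ⊗ R/m` plus flatness of `N` gives injectivity of
`f ⊗ R/m^t` for all `t`. -/
lemma aux_inj_lTensor_pow (f : M →ₗ[R] N) [Module.Flat R N]
    (hbase : Function.Injective (f.lTensor (R ⧸ (maximalIdeal R))))
    (t : ℕ) :
    Function.Injective (f.lTensor (R ⧸ (maximalIdeal R ^ t : Ideal R))) := by
  induction t with
  | zero =>
    haveI : Subsingleton (R ⧸ (maximalIdeal R ^ 0 : Ideal R)) := by
      rw [Submodule.Quotient.subsingleton_iff]
      simp [Ideal.one_eq_top]
    haveI : Subsingleton ((R ⧸ (maximalIdeal R ^ 0 : Ideal R)) ⊗[R] M) := by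
      constructor
      intro a b
      have hz : ∀ z : (R ⧸ (maximalIdeal R ^ 0 : Ideal R)) ⊗[R] M, z = 0 := by
        intro z
        induction z with
        | zero => rfl
        | tmul c x => rw [Subsingleton.elim c 0, zero_tmul]
        | add x y hx hy => rw [hx, hy, add_zero]
      rw [hz a, hz b]
    intro a b _
    exact Subsingleton.elim a b
  | succ t ih =>
    set m := maximalIdeal R
    have hle : (m ^ (t + 1) : Ideal R) ≤ Submodule.comap LinearMap.id (m ^ t : Ideal R) := by
      simpa using Ideal.pow_le_pow_right (Nat.le_succ t)
    set π : (R ⧸ (m ^ (t+1) : Ideal R)) →ₗ[R] (R ⧸ (m ^ t : Ideal R)) :=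
      Submodule.mapQ _ _ LinearMap.id hle with hπ
    have hπsurj : Function.Surjective π := by
      intro y
      obtain ⟨x, rfl⟩ := Submodule.Quotient.mk_surjective _ y
      refine ⟨Submodule.Quotient.mk x, ?_⟩
      rw [hπ, Submodule.mapQ_apply]
      rfl
    set K := LinearMap.ker π
    have hexact : Function.Exact K.subtype π := π.exact_subtype_ker_map
    -- torsion
    have htors : Module.IsTorsionBySet R K (m : Set R) := by
      rintro ⟨x, hx⟩ ⟨a, ha⟩
      obtain ⟨b, rfl⟩ := Submodule.Quotient.mk_surjective _ x
      have hb : b ∈ (m ^ t : Ideal R) := by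
        have : π (Submodule.Quotient.mk b) = 0 := hx
        rw [hπ, Submodule.mapQ_apply] at this
        exact (Submodule.Quotient.mk_eq_zero _).mp this
      apply Subtype.ext
      show a • (Submodule.Quotient.mk b : R ⧸ (m ^ (t+1) : Ideal R)) = 0
      rw [← Submodule.Quotient.mk_smul, Submodule.Quotient.mk_eq_zero]
      have : b * a ∈ (m ^ (t+1) : Ideal R) := by
        rw [pow_succ]
        exact Ideal.mul_mem_mul hb ha
      simpa [smul_eq_mul, mul_comm] using this
    -- the four maps
    have hv₁ : Function.Injective (f.lTensor K) :=
      aux_inj_lTensor_torsion f (maximalIdeal R) K htors hbase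
    have hg₁ : Function.Injective (K.subtype.rTensor N) :=
      Module.Flat.rTensor_preserves_injective_linearMap K.subtype K.injective_subtype
    have htop : Function.Exact (K.subtype.rTensor M) (π.rTensor M) :=
      rTensor_exact M hexact hπsurj
    have hsq₁ : (f.lTensor (R ⧸ (m ^ (t+1) : Ideal R))) ∘ₗ (K.subtype.rTensor M)
        = (K.subtype.rTensor N) ∘ₗ (f.lTensor K) := by
      rw [LinearMap.lTensor_comp_rTensor, LinearMap.rTensor_comp_lTensor]
    have hsq₂ : (f.lTensor (R ⧸ (m ^ t : Ideal R))) ∘ₗ (π.rTensor M)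
        = (π.rTensor N) ∘ₗ (f.lTensor (R ⧸ (m ^ (t+1) : Ideal R))) := by
      rw [LinearMap.lTensor_comp_rTensor, LinearMap.rTensor_comp_lTensor]
    -- the chase
    intro z z' hzz
    suffices h : ∀ x, f.lTensor (R ⧸ (m ^ (t+1) : Ideal R)) x = 0 → x = 0 by
      have := h (z - z') (by rw [map_sub, hzz, sub_self])
      exact sub_eq_zero.mp this
    intro x hx
    have h1 : f.lTensor (R ⧸ (m ^ t : Ideal R)) (π.rTensor M x) = 0 := by
      have := LinearMap.congr_fun hsq₂ x
      rw [LinearMap.comp_apply, LinearMap.comp_apply] at this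
      rw [this, hx, map_zero]
    have h2 : π.rTensor M x = 0 := by
      apply ih
      rw [h1, map_zero]
    obtain ⟨y, rfl⟩ := (htop x).mp h2
    have h3 : (K.subtype.rTensor N) (f.lTensor K y) = 0 := by
      have := LinearMap.congr_fun hsq₁ y
      rw [LinearMap.comp_apply, LinearMap.comp_apply] at this
      rw [← this, hx]
    have h4 : f.lTensor K y = 0 := by
      apply hg₁; rw [h3, map_zero]
    have h5 : y = 0 := by
      apply hv₁; rw [h4, map_zero]
    rw [h5, map_zero]

end Aux3
section Aux4

open IsLocalRing

/-- Universe-polymorphic Krull intersection theorem for finite modules over noetherian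
local rings. -/
lemma aux_krull {S : Type*} [CommRing S] [IsNoetherianRing S] [IsLocalRing S]
    {M : Type*} [AddCommGroup M] [Module S M] [Module.Finite S M] :
    (⨅ t : ℕ, (maximalIdeal S ^ t : Ideal S) • ⊤ : Submodule S M) = ⊥ := by
  obtain ⟨k, p, hp⟩ := Module.Finite.exists_fin' S M
  let M₀ := (Fin k → S) ⧸ LinearMap.ker p
  let e : M₀ ≃ₗ[S] M := p.quotKerEquivOfSurjective hp
  haveI : Module.Finite S M₀ :=
    Module.Finite.of_surjective (LinearMap.ker p).mkQ (Submodule.mkQ_surjective _)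
  have key : (⨅ t : ℕ, (maximalIdeal S ^ t : Ideal S) • ⊤ : Submodule S M₀) = ⊥ :=
    (maximalIdeal S).iInf_pow_smul_eq_bot_of_isLocalRing (M := M₀)
      (Ideal.IsMaximal.ne_top inferInstance)
  rw [eq_bot_iff]
  intro x hx
  have hy : e.symm x ∈ (⨅ t : ℕ, (maximalIdeal S ^ t : Ideal S) • ⊤ : Submodule S M₀) := by
    rw [Submodule.mem_iInf]
    intro t
    have hxt : x ∈ (maximalIdeal S ^ t : Ideal S) • (⊤ : Submodule S M) :=
      (Submodule.mem_iInf _).mp hx t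
    have : e.symm x ∈ Submodule.map (e.symm : M →ₗ[S] M₀)
        ((maximalIdeal S ^ t : Ideal S) • (⊤ : Submodule S M)) :=
      Submodule.mem_map_of_mem hxt
    rwa [Submodule.map_smul'', Submodule.map_top, LinearEquiv.range] at this
  rw [key] at hy
  have : e.symm x = 0 := hy
  have := congrArg e this
  simpa using this

end Aux4
section Main

open IsLocalRing


set_option maxHeartbeats 2000000 in
set_option synthInstance.maxHeartbeats 400000 in
/--
Let `ψ : R → S` be a local homomorphism between commutative noetherian
local rings with maximal ideals `m ⊆ R` and `n ⊆ S`. Let `u : M → N` be a homomorphism of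
finitely generated `S`-modules such that `N` is flat as an `R`-module. If the induced map
`u ⊗_R R/m : M/mM → N/mN` (realized here, via the canonical identification
`M ⊗_R R/m ≅ M ⊗_S S/mS`, as the base change of `u` along `S → S/mS`) is injective with
free `S/mS`-cokernel, then `u` is injective with free `S`-cokernel.
-/
theorem stmt0 {R S M N : Type*} [CommRing R] [CommRing S]
    [IsNoetherianRing R] [IsNoetherianRing S]
    [IsLocalRing R] [IsLocalRing S] [Algebra R S]
    [IsLocalHom (algebraMap R S)]
    [AddCommGroup M] [Module S M] [AddCommGroup N] [Module S N]
    [Module R M] [IsScalarTower R S M] [Module R N] [IsScalarTower R S N]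
    [Module.Finite S M] [Module.Finite S N] [Module.Flat R N]
    (u : M →ₗ[S] N)
    (hinj : Function.Injective
      (LinearMap.baseChange (S ⧸ (IsLocalRing.maximalIdeal R).map (algebraMap R S)) u))
    (hfree : Module.Free (S ⧸ (IsLocalRing.maximalIdeal R).map (algebraMap R S))
      (((S ⧸ (IsLocalRing.maximalIdeal R).map (algebraMap R S)) ⊗[S] N) ⧸
        LinearMap.range
          (LinearMap.baseChange (S ⧸ (IsLocalRing.maximalIdeal R).map (algebraMap R S)) u))) :
    Function.Injective u ∧ Module.Free S (N ⧸ LinearMap.range u) := by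
  classical
  set I : Ideal S := (IsLocalRing.maximalIdeal R).map (algebraMap R S) with hIdef
  -- `I ≤ n`
  have himn : I ≤ maximalIdeal S := by
    rw [hIdef, Ideal.map_le_iff_le_comap]
    intro a ha
    rw [Ideal.mem_comap, IsLocalRing.mem_maximalIdeal, mem_nonunits_iff]
    intro hu
    exact (IsLocalRing.mem_maximalIdeal a).mp ha ((isUnit_map_iff (algebraMap R S) a).mp hu)
  -- base case over S
  have hinjS : Function.Injective (u.lTensor (S ⧸ I)) := hinj
  have hm1 : ∀ x : M, u x ∈ I • (⊤ : Submodule S N) → x ∈ I • (⊤ : Submodule S M) :=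
    (aux_inj_lTensor_quot_iff u I).mp hinjS
  -- base case over R
  have hbaseR : Function.Injective
      ((u.restrictScalars R).lTensor (R ⧸ maximalIdeal R)) := by
    apply (aux_inj_lTensor_quot_iff (u.restrictScalars R) (maximalIdeal R)).mpr
    intro x hx
    rw [← aux_restrict_smul_top (S := S) (maximalIdeal R) N,
      Submodule.restrictScalars_mem] at hx
    have h2 := hm1 x hx
    rw [← aux_restrict_smul_top (S := S) (maximalIdeal R) M] at *
    exact h2
  -- Goal 1: injectivity of u
  have hu1 : Function.Injective u := by
    suffices h : ∀ x : M, u x = 0 → x = 0 by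
      intro a b hab
      exact sub_eq_zero.mp (h (a - b) (by rw [map_sub, hab, sub_self]))
    intro x hx
    have hall : ∀ t : ℕ,
        x ∈ ((maximalIdeal S ^ t : Ideal S) • (⊤ : Submodule S M)) := by
      intro t
      have h1 : Function.Injective
          ((u.restrictScalars R).lTensor (R ⧸ (maximalIdeal R ^ t : Ideal R))) :=
        aux_inj_lTensor_pow _ hbaseR t
      have h2 := (aux_inj_lTensor_quot_iff (u.restrictScalars R) (maximalIdeal R ^ t)).mp h1 x
        (by show u x ∈ _; rw [hx]; exact Submodule.zero_mem _)
      rw [← aux_restrict_smul_top (S := S) (maximalIdeal R ^ t) M,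
        Submodule.restrictScalars_mem] at h2
      have h4 : ((maximalIdeal R ^ t).map (algebraMap R S)) ≤ (maximalIdeal S ^ t) := by
        rw [Ideal.map_pow]
        exact Ideal.pow_right_mono himn t
      exact Submodule.smul_mono h4 le_rfl h2
    have hbot := aux_krull (S := S) (M := M)
    have hx0 : x ∈ (⨅ t : ℕ, (maximalIdeal S ^ t : Ideal S) • (⊤ : Submodule S M)) :=
      Submodule.mem_iInf _ |>.mpr hall
    rw [hbot] at hx0
    simpa using hx0
  refine ⟨hu1, ?_⟩
  -- ===== Goal 2 =====
  -- (2a) transfer freeness to `(S⧸I) ⊗[S] Q` where `Q := N ⧸ range u`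
  set Q := N ⧸ LinearMap.range u with hQdef
  set g : ((S ⧸ I) ⊗[S] N) →ₗ[S ⧸ I] ((S ⧸ I) ⊗[S] Q) :=
    (LinearMap.range u).mkQ.baseChange (S ⧸ I) with hgdef
  have hgsurj : Function.Surjective g := by
    show Function.Surjective ((LinearMap.range u).mkQ.lTensor (S ⧸ I))
    exact LinearMap.lTensor_surjective _ (Submodule.mkQ_surjective _)
  have hexQ : Function.Exact (u.lTensor (S ⧸ I)) ((LinearMap.range u).mkQ.lTensor (S ⧸ I)) :=
    lTensor_exact (S ⧸ I) (LinearMap.exact_map_mkQ_range u) (Submodule.mkQ_surjective _)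
  have hker : LinearMap.ker g = LinearMap.range (u.baseChange (S ⧸ I)) := by
    ext z
    rw [LinearMap.mem_ker, LinearMap.mem_range]
    constructor
    · intro hz
      obtain ⟨w, hw⟩ := (hexQ z).mp hz
      exact ⟨w, hw⟩
    · rintro ⟨w, rfl⟩
      exact (hexQ _).mpr ⟨w, rfl⟩
  have hfreeQ : Module.Free (S ⧸ I) ((S ⧸ I) ⊗[S] Q) := by
    refine Module.Free.of_equiv (R := S ⧸ I) (R' := S ⧸ I) (σ := RingHom.id _) (σ' := RingHom.id _)
      (M := ((S ⧸ I) ⊗[S] N) ⧸ LinearMap.range (u.baseChange (S ⧸ I))) ?_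
    exact (Submodule.quotEquivOfEq _ _ hker.symm) ≪≫ₗ g.quotKerEquivOfSurjective hgsurj
  -- (2b) a finite basis
  haveI : Module.Finite S Q := Module.Finite.of_surjective
    (LinearMap.range u).mkQ (Submodule.mkQ_surjective _)
  haveI : Module.Finite (S ⧸ I) ((S ⧸ I) ⊗[S] Q) := inferInstance
  set ι := Module.Free.ChooseBasisIndex (S ⧸ I) ((S ⧸ I) ⊗[S] Q) with hιdef
  haveI : Fintype ι := inferInstance
  set b := Module.Free.chooseBasis (S ⧸ I) ((S ⧸ I) ⊗[S] Q) with hbdef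
  -- (2c) lift the basis
  set τ : Q →ₗ[S] (S ⧸ I) ⊗[S] Q := TensorProduct.mk S (S ⧸ I) Q 1 with hτdef
  have hτ1 : ∀ s : S, s • (1 : S ⧸ I) = Ideal.Quotient.mk I s := by
    intro s
    rw [Algebra.smul_def, Ideal.Quotient.algebraMap_eq, mul_one]
  have hτsurj : Function.Surjective τ := by
    intro z
    induction z with
    | zero => exact ⟨0, map_zero τ⟩
    | tmul c q =>
      obtain ⟨s, rfl⟩ := Ideal.Quotient.mk_surjective c
      refine ⟨s • q, ?_⟩
      show (1 : S ⧸ I) ⊗ₜ[S] (s • q) = _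
      rw [TensorProduct.tmul_smul, TensorProduct.smul_tmul', hτ1]
    | add x y hx hy =>
      obtain ⟨a, ha⟩ := hx; obtain ⟨c, hc⟩ := hy
      exact ⟨a + c, by rw [map_add, ha, hc]⟩
  choose q hq using fun i : ι => hτsurj (b i)
  -- (2d) the lifts generate `Q`
  have hjac : I ≤ Ideal.jacobson ⊥ := by
    rw [IsLocalRing.jacobson_eq_maximalIdeal ⊥ bot_ne_top]; exact himn
  have hτsmul : ∀ (s : S) (z : (S ⧸ I) ⊗[S] Q),
      (Ideal.Quotient.mk I s) • z = s • z := by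
    intro s z
    rw [← Ideal.Quotient.algebraMap_eq, algebraMap_smul]
  have hspan : Submodule.span S (Set.range q) = ⊤ := by
    have hsup : (⊤ : Submodule S Q) ≤ Submodule.span S (Set.range q)
        ⊔ I • (⊤ : Submodule S Q) := by
      intro x _
      set cq : ι → S := fun i => (Ideal.Quotient.mk_surjective (b.equivFun (τ x) i)).choose
        with hcq
      have hc : ∀ i, Ideal.Quotient.mk I (cq i) = b.equivFun (τ x) i := fun i =>
        (Ideal.Quotient.mk_surjective (b.equivFun (τ x) i)).choose_spec
      have hxsum : τ (x - ∑ i, cq i • q i) = 0 := by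
        rw [map_sub, map_sum]
        have hterm : ∀ i : ι, τ (cq i • q i) = (b.equivFun (τ x) i) • b i := by
          intro i
          rw [map_smul, hq, ← hc i, hτsmul]
        rw [Finset.sum_congr rfl (fun i _ => hterm i), b.sum_equivFun (τ x), sub_self]
      have hd : (x - ∑ i, cq i • q i) ∈ I • (⊤ : Submodule S Q) := by
        have h0 : (TensorProduct.quotTensorEquivQuotSMul Q I)
            ((Ideal.Quotient.mk I 1) ⊗ₜ[S] (x - ∑ i, cq i • q i)) = 0 := by
          have : ((Ideal.Quotient.mk I 1) : S ⧸ I) = 1 := map_one _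
          rw [this]
          rw [show ((1 : S ⧸ I) ⊗ₜ[S] (x - ∑ i, cq i • q i)) = τ (x - ∑ i, cq i • q i)
            from rfl, hxsum, map_zero]
        rw [TensorProduct.quotTensorEquivQuotSMul_mk_tmul, one_smul,
          Submodule.Quotient.mk_eq_zero] at h0
        exact h0
      have hxeq : x = (x - ∑ i, cq i • q i) + ∑ i, cq i • q i := by abel
      rw [hxeq]
      refine Submodule.add_mem _ (Submodule.mem_sup_right hd) (Submodule.mem_sup_left ?_)
      exact Submodule.sum_mem _ fun i _ =>
        Submodule.smul_mem _ _ (Submodule.subset_span ⟨i, rfl⟩)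
    have := Submodule.le_of_le_smul_of_le_jacobson_bot Module.Finite.fg_top hjac hsup
    exact eq_top_iff.mpr this
  -- (2e) surjection onto Q and its lift to N
  set π : (ι → S) →ₗ[S] Q := Fintype.linearCombination S q with hπdef
  have hπs : Function.Surjective π := by
    rw [← LinearMap.range_eq_top, hπdef, Fintype.range_linearCombination, hspan]
  choose n hn using fun i : ι => Submodule.Quotient.mk_surjective (LinearMap.range u) (q i)
  set φ : (ι → S) →ₗ[S] N := Fintype.linearCombination S n with hφdef
  have hφπ : (LinearMap.range u).mkQ ∘ₗ φ = π := by
    apply LinearMap.ext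
    intro f
    simp only [LinearMap.comp_apply, hφdef, hπdef, Fintype.linearCombination_apply,
      map_sum, map_smul, Submodule.mkQ_apply]
    exact Finset.sum_congr rfl fun i _ => by rw [hn]
  -- (2f) the kernel of π has coordinates in I
  set K := LinearMap.ker π with hKdef
  have hKI : ∀ x : (ι → S), x ∈ K → ∀ i, x i ∈ I := by
    intro x hx i
    have h1 : τ (π x) = 0 := by
      rw [LinearMap.mem_ker.mp hx, map_zero]
    have h2 : ∑ j, (Ideal.Quotient.mk I (x j)) • b j = 0 := by
      have e1 : ∀ j : ι, (Ideal.Quotient.mk I (x j)) • b j = x j • τ (q j) := by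
        intro j; rw [hq, hτsmul]
      calc ∑ j, (Ideal.Quotient.mk I (x j)) • b j = ∑ j, x j • τ (q j) :=
            Finset.sum_congr rfl fun j _ => e1 j
        _ = τ (π x) := by
            rw [hπdef, Fintype.linearCombination_apply, map_sum]
            exact Finset.sum_congr rfl fun j _ => (map_smul τ (x j) (q j)).symm
        _ = 0 := h1
    have h3 := Fintype.linearIndependent_iff.mp b.linearIndependent
      (fun j => Ideal.Quotient.mk I (x j)) h2 i
    exact Ideal.Quotient.eq_zero_iff_mem.mp h3
  have hKsub : K ≤ I • (⊤ : Submodule S (ι → S)) := by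
    intro x hx
    have hxs : x = ∑ i, x i • (fun j => if i = j then (1 : S) else 0) := pi_eq_sum_univ x
    rw [hxs]
    exact Submodule.sum_mem _ fun i _ => Submodule.smul_mem_smul (hKI x hx i) trivial
  -- (2g) the comparison map ψ : K → M
  have hmemκ : ∀ κ : K, φ κ.1 ∈ LinearMap.range u := by
    intro κ
    have h1 : (LinearMap.range u).mkQ (φ κ.1) = 0 := by
      rw [← LinearMap.comp_apply, hφπ]
      exact LinearMap.mem_ker.mp κ.2
    rwa [← LinearMap.mem_ker, Submodule.ker_mkQ] at h1
  set eqv := LinearEquiv.ofInjective u hu1 with heqv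
  set cK : K →ₗ[S] LinearMap.range u :=
    (φ ∘ₗ K.subtype).codRestrict _ (fun κ => hmemκ κ) with hcK
  set ψ : K →ₗ[S] M := eqv.symm.toLinearMap ∘ₗ cK with hψdef
  have hψ : ∀ κ : K, u (ψ κ) = φ κ.1 := by
    intro κ
    have h1 : eqv (ψ κ) = cK κ := by
      rw [hψdef]
      exact eqv.apply_symm_apply (cK κ)
    have h2 : ((eqv (ψ κ) : LinearMap.range u) : N) = u (ψ κ) := by
      simp [heqv, LinearEquiv.ofInjective_apply]
    rw [← h2, h1]
    rfl
  -- (2h) the exact sequence 0 → K → M × (ι → S) → N → 0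
  set g1 : K →ₗ[S] (M × (ι → S)) := ψ.prod K.subtype with hg1
  set e2 : (M × (ι → S)) →ₗ[S] N :=
    (φ ∘ₗ LinearMap.snd S M (ι → S)) - (u ∘ₗ LinearMap.fst S M (ι → S)) with he2
  have he2ap : ∀ x : M × (ι → S), e2 x = φ x.2 - u x.1 := fun x => rfl
  have hg1inj : Function.Injective g1 := by
    intro a b hab
    have h1 : (g1 a).2 = (g1 b).2 := by rw [hab]
    exact Subtype.ext h1
  have hg1e2 : ∀ κ : K, e2 (g1 κ) = 0 := by
    intro κ
    rw [he2ap]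
    show φ κ.1 - u (ψ κ) = 0
    rw [hψ, sub_self]
  have hexact2 : Function.Exact g1 e2 := by
    rw [LinearMap.exact_iff]
    apply le_antisymm
    · intro z hz
      have hz0 : φ z.2 - u z.1 = 0 := by rw [← he2ap]; exact LinearMap.mem_ker.mp hz
      have hz1 : φ z.2 = u z.1 := sub_eq_zero.mp hz0
      have hpK : z.2 ∈ K := by
        rw [hKdef, LinearMap.mem_ker, ← hφπ, LinearMap.comp_apply, hz1,
          Submodule.mkQ_apply, Submodule.Quotient.mk_eq_zero]
        exact LinearMap.mem_range_self u z.1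
      refine ⟨⟨z.2, hpK⟩, ?_⟩
      have hψz : u (ψ ⟨z.2, hpK⟩) = u z.1 := by rw [hψ]; exact hz1
      have : ψ ⟨z.2, hpK⟩ = z.1 := hu1 hψz
      show (ψ ⟨z.2, hpK⟩, z.2) = z
      rw [this]
    · rintro z ⟨κ, rfl⟩
      exact LinearMap.mem_ker.mpr (hg1e2 κ)
  have he2surj : Function.Surjective e2 := by
    intro n0
    obtain ⟨f, hf⟩ := hπs ((LinearMap.range u).mkQ n0)
    have h1 : (LinearMap.range u).mkQ (φ f - n0) = 0 := by
      rw [map_sub, ← LinearMap.comp_apply, hφπ, hf, sub_self]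
    have h2 : φ f - n0 ∈ LinearMap.range u := by
      rwa [← LinearMap.mem_ker, Submodule.ker_mkQ] at h1
    obtain ⟨m0, hm0⟩ := h2
    refine ⟨(m0, f), ?_⟩
    rw [he2ap]
    simp only [hm0, sub_sub_cancel]
  -- (2i) purity: tensoring the sequence with R/m stays left-exact
  have hpure : Function.Injective
      ((g1.restrictScalars R).lTensor (R ⧸ maximalIdeal R)) := by
    refine lTensor_injective_of_exact_of_exact_of_rTensor_injective
      (f₁ := (maximalIdeal R).subtype) (f₂ := (maximalIdeal R).mkQ)
      (g₁ := g1.restrictScalars R) (g₂ := e2.restrictScalars R)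
      (LinearMap.exact_subtype_mkQ _) (Submodule.mkQ_surjective _) ?_ ?_ ?_ ?_
    · exact hexact2
    · exact he2surj
    · exact Module.Flat.rTensor_preserves_injective_linearMap _
        (Submodule.injective_subtype _)
    · exact Module.Flat.lTensor_preserves_injective_linearMap _ hg1inj
  -- (2j) conclude that K ⊗ R/m = 0
  have hψφ : (u.restrictScalars R) ∘ₗ (ψ.restrictScalars R)
      = (φ.restrictScalars R) ∘ₗ ((K.subtype).restrictScalars R) := by
    apply LinearMap.ext
    intro κ
    exact hψ κ
  have hιz : ((K.subtype).restrictScalars R).lTensor (R ⧸ maximalIdeal R) = 0 := by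
    apply aux_lTensor_eq_zero
    intro κ
    have h1 : (κ : ι → S) ∈ I • (⊤ : Submodule S (ι → S)) := hKsub κ.2
    rw [← aux_restrict_smul_top (S := S) (maximalIdeal R) (ι → S),
      Submodule.restrictScalars_mem] at *
    exact h1
  have hz : ∀ z : (R ⧸ maximalIdeal R) ⊗[R] ↥K, z = 0 := by
    intro z
    have h1 : (((K.subtype).restrictScalars R).lTensor (R ⧸ maximalIdeal R)) z = 0 := by
      rw [hιz]; rfl
    have h2 : ((ψ.restrictScalars R).lTensor (R ⧸ maximalIdeal R)) z = 0 := by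
      apply hbaseR
      have h3 : ((u.restrictScalars R).lTensor (R ⧸ maximalIdeal R))
          (((ψ.restrictScalars R).lTensor (R ⧸ maximalIdeal R)) z)
          = ((φ.restrictScalars R).lTensor (R ⧸ maximalIdeal R))
            ((((K.subtype).restrictScalars R).lTensor (R ⧸ maximalIdeal R)) z) := by
        rw [← LinearMap.comp_apply, ← LinearMap.lTensor_comp, hψφ,
          LinearMap.lTensor_comp, LinearMap.comp_apply]
      rw [h3, h1, map_zero, map_zero]
    have hE : ∀ w : (R ⧸ maximalIdeal R) ⊗[R] K,
        (TensorProduct.prodRight R R (R ⧸ maximalIdeal R) M (ι → S))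
            (((g1.restrictScalars R).lTensor (R ⧸ maximalIdeal R)) w)
          = (((ψ.restrictScalars R).lTensor (R ⧸ maximalIdeal R)) w,
             (((K.subtype).restrictScalars R).lTensor (R ⧸ maximalIdeal R)) w) := by
      intro w
      induction w with
      | zero => simp; rfl
      | tmul c κ =>
        rw [show ((g1.restrictScalars R).lTensor (R ⧸ maximalIdeal R)) (c ⊗ₜ[R] κ)
          = c ⊗ₜ[R] ((ψ κ, (κ : ι → S)) : M × (ι → S)) from rfl]
        simp
      | add a c ha hc => rw [map_add, map_add, ha, hc, map_add, map_add, Prod.mk_add_mk]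
    have h4 : ((g1.restrictScalars R).lTensor (R ⧸ maximalIdeal R)) z = 0 := by
      apply (TensorProduct.prodRight R R (R ⧸ maximalIdeal R) M (ι → S)).injective
      rw [hE z, h1, h2, map_zero]
      rfl
    apply hpure
    rw [h4, map_zero]
  -- K = ⊥ by Nakayama
  have hKbot : K = ⊥ := by
    have hKm : ∀ κ : ↥K, κ ∈ ((maximalIdeal R) • (⊤ : Submodule R ↥K)) := by
      intro κ
      have h0 : ((Ideal.Quotient.mk (maximalIdeal R) 1) ⊗ₜ[R] κ
          : (R ⧸ maximalIdeal R) ⊗[R] ↥K) = 0 := hz _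
      have h1 : (TensorProduct.quotTensorEquivQuotSMul (↥K) (maximalIdeal R))
          ((Ideal.Quotient.mk (maximalIdeal R) 1) ⊗ₜ[R] κ) = 0 := by
        rw [h0]; exact map_zero _
      rw [TensorProduct.quotTensorEquivQuotSMul_mk_tmul, one_smul,
        Submodule.Quotient.mk_eq_zero] at h1
      exact h1
    have hKn : (⊤ : Submodule S ↥K) ≤ (maximalIdeal S) • (⊤ : Submodule S ↥K) := by
      intro κ _
      have h2 : κ ∈ (I • (⊤ : Submodule S ↥K)).restrictScalars R := by
        rw [aux_restrict_smul_top (S := S) (maximalIdeal R) ↥K]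
        exact hKm κ
      rw [Submodule.restrictScalars_mem] at h2
      exact Submodule.smul_mono himn le_rfl h2
    have hfgK : (⊤ : Submodule S ↥K).FG := by
      haveI : IsNoetherian S (ι → S) := inferInstance
      exact (Submodule.fg_top _).mpr (IsNoetherian.noetherian K)
    have hbot := Submodule.eq_bot_of_le_smul_of_le_jacobson_bot (maximalIdeal S) ⊤ hfgK hKn
      (le_of_eq (IsLocalRing.jacobson_eq_maximalIdeal ⊥ bot_ne_top).symm)
    rw [Submodule.eq_bot_iff]
    intro x hx
    have hxt : (⟨x, hx⟩ : ↥K) ∈ (⊤ : Submodule S ↥K) := Submodule.mem_top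
    rw [hbot, Submodule.mem_bot] at hxt
    exact congrArg Subtype.val hxt
  have hπinj : Function.Injective π := by
    rw [← LinearMap.ker_eq_bot]
    exact hKbot
  exact Module.Free.of_equiv (LinearEquiv.ofBijective π ⟨hπinj, hπs⟩)


end Main
end

section
/- Let R → T be a homomorphism of commutative rings and let E be a T-module (regarded as an R-module by restriction of scalars). Consider the canonical homomorphism of graded R-algebras Sym_R(E) → Sym_T(E), induced via the universal property of the symmetric algebra Sym_R(E) by the R-linear structure map E → Sym_T(E) (where Sym_T(E) is regarded as an R-algebra through R → T). Then this map is surjective in every degree n ≥ 1; that is, for each n ≥ 1 the induced map Sym^n_R(E) → Sym^n_T(E) on degree-n components is surjective. -/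
open TensorAlgebra

/-- The relation on the tensor algebra used to define the symmetric algebra. -/
inductive SymRel (R M : Type*) [CommRing R] [AddCommGroup M] [Module R M] :
    TensorAlgebra R M → TensorAlgebra R M → Prop
  | mul_comm (x y : M) : SymRel R M (ι R x * ι R y) (ι R y * ι R x)

/-- The symmetric algebra `Sym_R(M)` of a module `M` over a commutative ring `R`. -/
abbrev SymmAlg (R M : Type*) [CommRing R] [AddCommGroup M] [Module R M] :=
  RingQuot (_root_.SymRel R M)

/-- The canonical `R`-linear map `M → Sym_R(M)` (inclusion of degree one). -/
noncomputable def symι (R M : Type*) [CommRing R] [AddCommGroup M] [Module R M] :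
    M →ₗ[R] SymmAlg R M :=
  (RingQuot.mkAlgHom R (_root_.SymRel R M)).toLinearMap ∘ₗ ι R

variable (R T E : Type*) [CommRing R] [CommRing T] [Algebra R T]
  [AddCommGroup E] [Module T E] [Module R E] [IsScalarTower R T E]

/-- The canonical morphism of graded `R`-algebras `Sym_R(E) → Sym_T(E)` induced, via the
universal property of the symmetric algebra, by the `R`-linear map `E → Sym_T(E)`. -/
noncomputable def symMap : SymmAlg R E →ₐ[R] SymmAlg T E :=
  RingQuot.liftAlgHom R ⟨TensorAlgebra.lift R ((symι T E).restrictScalars R), by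
    rintro x y ⟨a, b⟩
    simp only [map_mul, TensorAlgebra.lift_ι_apply]
    have h := RingQuot.mkAlgHom_rel T (_root_.SymRel.mul_comm (R := T) (M := E) a b)
    simpa only [map_mul, symι, LinearMap.restrictScalars_apply, LinearMap.coe_comp,
      Function.comp_apply, AlgHom.toLinearMap_apply] using h⟩

lemma symMap_symι (e : E) : symMap R T E (symι R E e) = symι T E e := by
  simp only [symι, LinearMap.coe_comp, Function.comp_apply, AlgHom.toLinearMap_apply, symMap]
  rw [RingQuot.liftAlgHom_mkAlgHom_apply]
  simp [TensorAlgebra.lift_ι_apply]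

/--
Let `R → T` be a homomorphism of commutative rings and `E` a `T`-module.
The canonical homomorphism of graded `R`-algebras `Sym_R(E) → Sym_T(E)` is surjective in
every degree `n ≥ 1`: every element of the degree-`n` component of `Sym_T(E)` (the `n`-th
power of the image of `E`) is the image of an element of the degree-`n` component of
`Sym_R(E)`.
-/
theorem stmt6 (n : ℕ) (hn : 1 ≤ n) :
    ∀ x ∈ (LinearMap.range (symι T E)) ^ n,
      ∃ y ∈ (LinearMap.range (symι R E)) ^ n, symMap R T E y = x := by
  induction n with
  | zero => omega
  | succ n ih =>
    rcases Nat.eq_or_lt_of_le hn with h | h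
    · -- n = 0 case : power 1
      intro x hx
      rw [← h, pow_one] at hx ⊢
      obtain ⟨e, rfl⟩ := hx
      exact ⟨symι R E e, ⟨e, rfl⟩, symMap_symι R T E e⟩
    · have hn' : 1 ≤ n := by omega
      intro x hx
      rw [pow_succ] at hx
      refine Submodule.mul_induction_on hx ?_ ?_
      · intro a ha b hb
        obtain ⟨y, hy, rfl⟩ := ih hn' a ha
        obtain ⟨e, rfl⟩ := hb
        refine ⟨y * symι R E e, ?_, ?_⟩
        · rw [pow_succ]
          exact Submodule.mul_mem_mul hy ⟨e, rfl⟩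
        · rw [map_mul, symMap_symι]
      · rintro x₁ x₂ ⟨y₁, hy₁, rfl⟩ ⟨y₂, hy₂, rfl⟩
        exact ⟨y₁ + y₂, Submodule.add_mem _ hy₁ hy₂, map_add _ _ _⟩
end

section
/- Let R be a commutative local ring and let V and W be free R-modules of rank two. Let r ∈ V ⊗_R W be a non-degenerate tensor, i.e. the R-linear map Hom_R(V, R) → W associated to r is an isomorphism. Then there exist a basis (x, y) of V and a basis (x', y') of W such that r = y ⊗ x' − x ⊗ y'. -/
open TensorProduct

variable {R V W : Type*} [CommRing R] [AddCommGroup V] [Module R V]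
  [AddCommGroup W] [Module R W]

/-- The `R`-linear map `Hom_R(V, R) → W` associated to a tensor `r ∈ V ⊗_R W`, obtained by
contracting a functional against the first tensor factor: `f ⊗ (v ⊗ w) ↦ f(v) • w`. -/
noncomputable def tensorContract (r : V ⊗[R] W) : Module.Dual R V →ₗ[R] W where
  toFun f := TensorProduct.lid R W (LinearMap.rTensor W f r)
  map_add' f g := by
    simp only [LinearMap.rTensor_add, LinearMap.add_apply, map_add]
  map_smul' c f := by
    simp only [LinearMap.rTensor_smul, LinearMap.smul_apply, map_smul, RingHom.id_apply]

lemma tensorContract_add (r s : V ⊗[R] W) (f : Module.Dual R V) :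
    tensorContract (r + s) f = tensorContract r f + tensorContract s f := by
  simp [tensorContract]

lemma tensorContract_tmul (v : V) (w : W) (f : Module.Dual R V) :
    tensorContract (v ⊗ₜ[R] w) f = f v • w := by
  simp [tensorContract]

lemma tensorContract_expand (bV : Module.Basis (Fin 2) R V) (r : V ⊗[R] W) :
    r = ∑ i, bV i ⊗ₜ[R] tensorContract r (bV.coord i) := by
  induction r using TensorProduct.induction_on with
  | zero => simp [tensorContract]
  | tmul v w =>
    simp only [tensorContract_tmul, ← TensorProduct.smul_tmul, ← TensorProduct.sum_tmul]
    rw [show ∑ i, bV.coord i v • bV i = v by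
      simpa [Module.Basis.coord_apply] using bV.sum_repr v]
  | add x y hx hy =>
    simp only [tensorContract_add, TensorProduct.tmul_add, Finset.sum_add_distrib]
    rw [← hx, ← hy]

/--
Let `R` be a commutative local ring and let `V` and `W` be free `R`-modules
of rank two. Let `r ∈ V ⊗_R W` be a non-degenerate tensor, i.e. the associated `R`-linear map
`Hom_R(V, R) → W` is an isomorphism. Then there exist a basis `(x, y)` of `V` and a basis
`(x', y')` of `W` such that `r = y ⊗ x' − x ⊗ y'`.
-/
theorem stmt8 [IsLocalRing R]
    (bV : Module.Basis (Fin 2) R V) (bW : Module.Basis (Fin 2) R W)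
    (r : V ⊗[R] W)
    (hr : Function.Bijective (tensorContract r)) :
    ∃ (b : Module.Basis (Fin 2) R V) (b' : Module.Basis (Fin 2) R W),
      r = b 1 ⊗ₜ[R] b' 0 - b 0 ⊗ₜ[R] b' 1 := by
  let φ := LinearEquiv.ofBijective (tensorContract r) hr
  let f : Module.Basis (Fin 2) R (Module.Dual R V) :=
    (bV.dualBasis.reindex (Equiv.swap 0 1)).unitsSMul (fun i => if i = 1 then -1 else 1)
  refine ⟨bV, f.map φ, ?_⟩
  have hf0 : f 0 = bV.dualBasis 1 := by
    simp [f, Module.Basis.unitsSMul_apply, Module.Basis.reindex_apply, Equiv.swap_apply_left]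
  have hf1 : f 1 = -(bV.dualBasis 0) := by
    simp [f, Module.Basis.unitsSMul_apply, Module.Basis.reindex_apply, Equiv.swap_apply_right]
  have hφ : ∀ g, φ g = tensorContract r g := fun g => rfl
  simp only [Module.Basis.map_apply, hf0, hf1, hφ, map_neg]
  rw [show bV.dualBasis 0 = bV.coord 0 by simp [Module.Basis.coe_dualBasis],
    show bV.dualBasis 1 = bV.coord 1 by simp [Module.Basis.coe_dualBasis],
    TensorProduct.tmul_neg, sub_neg_eq_add, add_comm]
  conv_lhs => rw [tensorContract_expand bV r, Fin.sum_univ_two]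
end
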